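/- Let f : X → X be a homeomorphism of a compact metric space X such that every point is uniformly recurrent. Then for any recurrent point A of the induced hyperspace map 2^f, the intersection of the stable set of A with ω_{2^f}(A) equals {A}; that is, if B ∈ ω_{2^f}(A) and d_H(f^n(A), f^n(B)) → 0, then B = A. -/
import Mathlib


open TopologicalSpace Metric Set Filter

/-- The induced map on the hyperspace of nonempty compact (= closed) subsets. -/
noncomputable def hyper {X : Type*} [MetricSpace X] (f : X ≃ₜ X) :
    NonemptyCompacts X → NonemptyCompacts X :=
  fun A => ⟨⟨f '' A, A.isCompact.image f.continuous⟩, A.nonempty.image f⟩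

/-- `x` is uniformly recurrent for `g`. -/
def IsUnifRec {α : Type*} [MetricSpace α] (g : α → α) (x : α) : Prop :=
  ∀ ε > (0:ℝ), ∃ N > 0, ∀ k : ℕ, dist (g^[k * N] x) x < ε

/-- `x` is recurrent for `g` (it belongs to its own ω-limit set). -/
def IsRec {α : Type*} [MetricSpace α] (g : α → α) (x : α) : Prop :=
  ∀ ε > (0:ℝ), ∀ m : ℕ, ∃ n ≥ m, 0 < n ∧ dist (g^[n] x) x < ε

/-- `x` is almost periodic for `g`. -/
def IsAP {α : Type*} [MetricSpace α] (g : α → α) (x : α) : Prop :=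
  ∀ ε > (0:ℝ), ∃ N : ℕ, ∀ n : ℕ, ∃ i < N, dist (g^[n + i] x) x < ε

/-- `(x, y)` is an asymptotic pair for `g`. -/
def Asymp {α : Type*} [MetricSpace α] (g : α → α) (x y : α) : Prop :=
  Filter.Tendsto (fun n => dist (g^[n] x) (g^[n] y)) Filter.atTop (nhds 0)

/-- `(x, y)` is a proximal pair for `g`. -/
def Proximal {α : Type*} [MetricSpace α] (g : α → α) (x y : α) : Prop :=
  ∀ ε > (0:ℝ), ∀ m : ℕ, ∃ n ≥ m, dist (g^[n] x) (g^[n] y) < ε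

/-- The ω-limit set of `x` under `g`. -/
def omegaSet {α : Type*} [MetricSpace α] (g : α → α) (x : α) : Set α :=
  {y | ∀ ε > (0:ℝ), ∀ m : ℕ, ∃ n ≥ m, dist (g^[n] x) y < ε}

/-- `M` is a minimal set of `g`. -/
def IsMinimalFor {α : Type*} [TopologicalSpace α] (g : α → α) (M : Set α) : Prop :=
  M.Nonempty ∧ IsClosed M ∧ Set.MapsTo g M M ∧
    ∀ M' ⊆ M, M'.Nonempty → IsClosed M' → Set.MapsTo g M' M' → M' = M

/-- `A` is internally chain transitive for `g`. -/
def ICT {α : Type*} [MetricSpace α] (g : α → α) (A : Set α) : Prop :=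
  ∀ a ∈ A, ∀ b ∈ A, ∀ ε > (0:ℝ), ∃ N : ℕ, 1 ≤ N ∧ ∃ c : ℕ → α,
    c 0 = a ∧ c N = b ∧ (∀ i ≤ N, c i ∈ A) ∧ ∀ i < N, dist (g (c i)) (c (i + 1)) < ε

/-- A recurrent point of a uniformly continuous map of a compact metric space is recurrent
along multiples of any `N > 0` (IP-set argument). -/
lemma Stmt1Aux.rec_mul {α : Type*} [MetricSpace α] [CompactSpace α] {g : α → α}
    (hg : UniformContinuous g) {x : α} (hx : IsRec g x) {N : ℕ} (hN : 0 < N)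
    {ε : ℝ} (hε : 0 < ε) (m : ℕ) :
    ∃ k ≥ m, 0 < k ∧ dist (g^[k * N] x) x < ε := by
  have step : ∀ δ : {d : ℝ // 0 < d}, ∃ p : ℕ × {d : ℝ // 0 < d},
      p.1 ≥ (m + 1) * N ∧ dist (g^[p.1] x) x < (δ : ℝ) / 2 ∧
      (p.2 : ℝ) ≤ (δ : ℝ) / 2 ∧
      ∀ z, dist z x < (p.2 : ℝ) → dist (g^[p.1] z) x < (δ : ℝ) := by
    rintro ⟨δ, hδ⟩
    obtain ⟨n, hn, hn0, hnd⟩ := hx (δ / 2) (by positivity) ((m + 1) * N)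
    have hucn : UniformContinuous g^[n] := UniformContinuous.iterate g n hg
    obtain ⟨η, hη, hηf⟩ := Metric.uniformContinuous_iff.1 hucn (δ / 2) (by positivity)
    refine ⟨⟨n, ⟨min η (δ / 2), by positivity⟩⟩, hn, hnd, min_le_right _ _, ?_⟩
    intro z hz
    have h1 : dist (g^[n] z) (g^[n] x) < δ / 2 := hηf (lt_of_lt_of_le hz (min_le_left _ _))
    calc dist (g^[n] z) x ≤ dist (g^[n] z) (g^[n] x) + dist (g^[n] x) x := dist_triangle _ _ _
      _ < δ / 2 + δ / 2 := by exact add_lt_add h1 hnd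
      _ = δ := by ring
  choose Ψ hΨ using step
  set seq : ℕ → ℕ × {d : ℝ // 0 < d} :=
    fun i => Nat.rec (0, ⟨ε, hε⟩) (fun _ p => Ψ p.2) i with hseq
  have hseq_succ : ∀ i, seq (i + 1) = Ψ (seq i).2 := fun i => rfl
  set Nn : ℕ → ℕ := fun i => (seq (i + 1)).1 with hNn
  set Eps : ℕ → ℝ := fun i => ((seq i).2 : ℝ) with hEps
  have hEpos : ∀ i, 0 < Eps i := fun i => (seq i).2.2
  have hprop : ∀ i, Nn i ≥ (m + 1) * N ∧ dist (g^[Nn i] x) x < Eps i / 2 ∧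
      Eps (i + 1) ≤ Eps i / 2 ∧ ∀ z, dist z x < Eps (i + 1) → dist (g^[Nn i] z) x < Eps i := by
    intro i
    have := hΨ (seq i).2
    rw [← hseq_succ i] at this
    exact this
  have hEle : ∀ i, Eps i ≤ ε := by
    intro i
    induction i with
    | zero => exact le_refl _
    | succ i ih =>
      exact le_trans (le_trans (hprop i).2.2.1 (by linarith [hEpos i])) ih
  have block : ∀ d j l, l = j + d + 1 →
      dist (g^[∑ i ∈ Finset.Ico j l, Nn i] x) x < Eps j := by
    intro d
    induction d with
    | zero =>
      intro j l hl
      subst hl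
      rw [show j + 0 + 1 = j + 1 by omega, Finset.sum_Ico_eq_sum_range]
      simp only [Nat.add_sub_cancel_left, Finset.range_one, Finset.sum_singleton, Nat.add_zero]
      exact lt_of_lt_of_le (hprop j).2.1 (by linarith [hEpos j])
    | succ d ih =>
      intro j l hl
      have h1 := ih (j + 1) l (by omega)
      have h2 := (hprop j).2.2.2 _ h1
      rw [← Function.iterate_add_apply] at h2
      rw [Finset.sum_eq_sum_Ico_succ_bot (by omega : j < l)]
      exact h2
  set S : ℕ → ℕ := fun l => ∑ i ∈ Finset.range l, Nn i with hS
  have hmaps : ∀ l ∈ Finset.range (N + 1), S l % N ∈ Finset.range N := by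
    intro l _
    exact Finset.mem_range.2 (Nat.mod_lt _ hN)
  obtain ⟨j, hj, l, hl, hjl, hmod⟩ :=
    Finset.exists_ne_map_eq_of_card_lt_of_maps_to
      (by simp only [Finset.card_range]; omega) hmaps
  wlog hlt : j < l generalizing j l
  · exact this l hl j hj hjl.symm hmod.symm (by omega)
  set T : ℕ := ∑ i ∈ Finset.Ico j l, Nn i with hT
  have hsum : S j + T = S l := by
    rw [hS]
    simp only [Finset.range_eq_Ico]
    exact Finset.sum_Ico_consecutive Nn (Nat.zero_le j) hlt.le
  have hdvd : N ∣ T := by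
    have hle : S j ≤ S l := by omega
    have := (Nat.modEq_iff_dvd' hle).1 hmod
    have hTeq : T = S l - S j := by omega
    rwa [← hTeq] at this
  obtain ⟨k, hk⟩ := hdvd
  have hTge : T ≥ Nn j := by
    refine Finset.single_le_sum (fun i _ => Nat.zero_le _) ?_
    exact Finset.mem_Ico.2 ⟨le_refl _, hlt⟩
  have hTge' : T ≥ (m + 1) * N := le_trans (hprop j).1 hTge
  have hkge : k ≥ m + 1 := by
    have h1 : N * (m + 1) ≤ N * k := by rw [← hk, Nat.mul_comm N (m+1)]; exact hTge'
    exact Nat.le_of_mul_le_mul_left h1 hN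
  have hdist : dist (g^[T] x) x < ε := by
    have := block (l - j - 1) j l (by omega)
    exact lt_of_lt_of_le this (hEle j)
  exact ⟨k, by omega, by omega, by rwa [show k * N = T by rw [hk, Nat.mul_comm]]⟩

section Stmt1Aux
variable {X : Type*} [MetricSpace X]

lemma Stmt1Aux.hyper_carrier (f : X ≃ₜ X) (A : NonemptyCompacts X) :
    ((hyper f A : NonemptyCompacts X) : Set X) = ⇑f '' (A : Set X) := rfl

lemma Stmt1Aux.hyper_iterate_carrier (f : X ≃ₜ X) (A : NonemptyCompacts X) (n : ℕ) :
    (((hyper f)^[n] A : NonemptyCompacts X) : Set X) = (⇑f)^[n] '' (A : Set X) := by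
  induction n with
  | zero => simp
  | succ n ih =>
    rw [Function.iterate_succ_apply', Stmt1Aux.hyper_carrier, ih, ← Set.image_comp,
      ← Function.iterate_succ']

lemma Stmt1Aux.edist_fin (A B : NonemptyCompacts X) :
    EMetric.hausdorffEdist (A : Set X) (B : Set X) ≠ ⊤ :=
  hausdorffEdist_ne_top_of_nonempty_of_bounded A.nonempty B.nonempty
    A.isCompact.isBounded B.isCompact.isBounded

lemma Stmt1Aux.exists_close {A B : NonemptyCompacts X} {r : ℝ} (h : dist A B < r)
    {a : X} (ha : a ∈ (A : Set X)) : ∃ b ∈ (B : Set X), dist a b < r := by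
  rw [NonemptyCompacts.dist_eq] at h
  exact exists_dist_lt_of_hausdorffDist_lt ha h (Stmt1Aux.edist_fin A B)

lemma Stmt1Aux.hyper_uc [CompactSpace X] (f : X ≃ₜ X) : UniformContinuous (hyper f) := by
  rw [Metric.uniformContinuous_iff]
  intro ε hε
  have hf : UniformContinuous ⇑f := CompactSpace.uniformContinuous_of_continuous f.continuous
  obtain ⟨δ, hδ, hδf⟩ := Metric.uniformContinuous_iff.1 hf (ε / 2) (by positivity)
  refine ⟨δ, hδ, fun {A B} hAB => ?_⟩
  have key : ∀ C D : NonemptyCompacts X, dist C D < δ →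
      ∀ x ∈ ((hyper f C : NonemptyCompacts X) : Set X),
        ∃ y ∈ ((hyper f D : NonemptyCompacts X) : Set X), dist x y ≤ ε / 2 := by
    intro C D hCD x hx
    rw [Stmt1Aux.hyper_carrier] at hx
    obtain ⟨a, ha, rfl⟩ := hx
    obtain ⟨b, hb, hab⟩ := Stmt1Aux.exists_close hCD ha
    exact ⟨f b, Set.mem_image_of_mem _ hb, (hδf hab).le⟩
  rw [NonemptyCompacts.dist_eq]
  calc hausdorffDist ((hyper f A : NonemptyCompacts X) : Set X) (hyper f B : NonemptyCompacts X)
      ≤ ε / 2 := hausdorffDist_le_of_mem_dist (by positivity) (key A B hAB)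
        (key B A (by rwa [dist_comm]))
    _ < ε := by linarith

/-- If `C` is asymptotic to a recurrent `D` in the hyperspace and every point of `X` is
uniformly recurrent, then `C ⊆ D`. -/
lemma Stmt1Aux.subset_of_asymp [CompactSpace X] (f : X ≃ₜ X)
    (hur : ∀ x : X, IsUnifRec f x) (C D : NonemptyCompacts X)
    (hD : IsRec (hyper f) D)
    (hasymp : Tendsto (fun n => dist ((hyper f)^[n] C) ((hyper f)^[n] D)) atTop (nhds 0)) :
    (C : Set X) ⊆ (D : Set X) := by
  intro a ha
  rw [← D.isCompact.isClosed.closure_eq, Metric.mem_closure_iff]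
  intro ε hε
  obtain ⟨N, hN, hNa⟩ := hur a (ε / 3) (by positivity)
  have hev : ∀ᶠ n in atTop, dist ((hyper f)^[n] C) ((hyper f)^[n] D) < ε / 3 :=
    hasymp.eventually_lt_const (by positivity)
  obtain ⟨m', hm'⟩ := eventually_atTop.1 hev
  obtain ⟨k, hk, hk0, hkd⟩ := Stmt1Aux.rec_mul (Stmt1Aux.hyper_uc f) hD hN
    (by positivity : (0:ℝ) < ε / 3) m'
  have hnm : k * N ≥ m' := le_trans hk (Nat.le_mul_of_pos_right k hN)
  have h1 : dist ((hyper f)^[k * N] C) ((hyper f)^[k * N] D) < ε / 3 := hm' _ hnm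
  have hfa : (⇑f)^[k * N] a ∈ (((hyper f)^[k * N] C : NonemptyCompacts X) : Set X) := by
    rw [Stmt1Aux.hyper_iterate_carrier]; exact Set.mem_image_of_mem _ ha
  obtain ⟨y, hy, hy1⟩ := Stmt1Aux.exists_close h1 hfa
  obtain ⟨b, hb, hb1⟩ := Stmt1Aux.exists_close hkd hy
  refine ⟨b, hb, ?_⟩
  have h3 : dist a ((⇑f)^[k * N] a) < ε / 3 := by rw [dist_comm]; exact hNa k
  calc dist a b ≤ dist a ((⇑f)^[k * N] a) + dist ((⇑f)^[k * N] a) y + dist y b :=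
        dist_triangle4 _ _ _ _
    _ < ε / 3 + ε / 3 + ε / 3 := by exact add_lt_add (add_lt_add h3 hy1) hb1
    _ = ε := by ring

end Stmt1Aux

theorem stmt1 {X : Type*} [MetricSpace X] [CompactSpace X] (f : X ≃ₜ X)
    (hur : ∀ x : X, IsUnifRec f x)
    (A : NonemptyCompacts X) (hA : IsRec (hyper f) A) :
    {B | Asymp (hyper f) A B} ∩ omegaSet (hyper f) A = {A} := by
  ext B
  simp only [Set.mem_inter_iff, Set.mem_setOf_eq, Set.mem_singleton_iff]
  constructor
  · rintro ⟨hasymp, homega⟩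
    have hasympT : Tendsto (fun n => dist ((hyper f)^[n] A) ((hyper f)^[n] B))
        atTop (nhds 0) := hasymp
    have homega' : ∀ ε > (0:ℝ), ∀ m : ℕ, ∃ n ≥ m, dist ((hyper f)^[n] A) B < ε := homega
    have hBrec : IsRec (hyper f) B := by
      intro ε hε m
      have hev : ∀ᶠ n in atTop, dist ((hyper f)^[n] A) ((hyper f)^[n] B) < ε / 2 :=
        hasympT.eventually_lt_const (by positivity)
      obtain ⟨m', hm'⟩ := eventually_atTop.1 hev
      obtain ⟨n, hn, hnd⟩ := homega' (ε / 2) (by positivity) (max (max m' m) 1)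
      have hnm' : n ≥ m' := le_trans (le_trans (le_max_left m' m) (le_max_left _ 1)) hn
      refine ⟨n, le_trans (le_trans (le_max_right m' m) (le_max_left _ 1)) hn,
        lt_of_lt_of_le (by omega) hn, ?_⟩
      calc dist ((hyper f)^[n] B) B
          ≤ dist ((hyper f)^[n] B) ((hyper f)^[n] A) + dist ((hyper f)^[n] A) B :=
            dist_triangle _ _ _
        _ < ε / 2 + ε / 2 := add_lt_add (by rw [dist_comm]; exact hm' n hnm') hnd
        _ = ε := by ring
    have hasymp' : Tendsto (fun n => dist ((hyper f)^[n] B) ((hyper f)^[n] A))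
        atTop (nhds 0) := by
      simpa [dist_comm] using hasympT
    have hAB : (A : Set X) ⊆ (B : Set X) :=
      Stmt1Aux.subset_of_asymp f hur A B hBrec hasympT
    have hBA : (B : Set X) ⊆ (A : Set X) :=
      Stmt1Aux.subset_of_asymp f hur B A hA hasymp'
    exact NonemptyCompacts.ext (Set.Subset.antisymm hBA hAB)
  · intro h
    subst h
    refine ⟨?_, ?_⟩
    · show Tendsto (fun n => dist ((hyper f)^[n] B) ((hyper f)^[n] B)) atTop (nhds 0)
      simp only [dist_self]
      exact tendsto_const_nhds
    · intro ε hε m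
      obtain ⟨n, hn, _, h2⟩ := hA ε hε m
      exact ⟨n, hn, h2⟩
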